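/- Let (Ω, μ) be a probability space, let w : Ω → [0,∞) be a weight, and let F ⊆ L¹(Ω, w dμ) be a class of integrable functions. Suppose ψ₁, …, ψ_{4n} are functions with pairwise disjoint supports such that ∫_Ω ψ_j w dμ ≥ δ for all j, and such that every function of the form ∑_{j=1}^{4n} α_j ψ_j with α_j ∈ {−1, 1} belongs to F. Then any deterministic quadrature rule using at most n function evaluations has worst-case error on F at least 2nδ (i.e., there exists f ∈ F with |∫ f w dμ − A_n(f)| ≥ 2nδ for any algorithm A_n using values at n points). -/
import Mathlib

open MeasureTheory

/-- Deterministic analogue of Novak's lemma: with `4n` disjointly supported bumps of weighted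
integral `≥ δ`, all of whose sign combinations lie in `F`, any deterministic quadrature using
`n` function values has worst-case error on `F` at least `2nδ`. -/
theorem stmt2 {Ω : Type*} [MeasurableSpace Ω] (μ : Measure Ω) [IsProbabilityMeasure μ]
    (w : Ω → ℝ) (hw : ∀ x, 0 ≤ w x)
    (F : Set (Ω → ℝ)) (hFint : ∀ f ∈ F, Integrable (fun x => f x * w x) μ)
    (n : ℕ) (δ : ℝ) (hδ : 0 ≤ δ) (ψ : Fin (4 * n) → Ω → ℝ)
    (hdisj : ∀ i j, i ≠ j → Disjoint (Function.support (ψ i)) (Function.support (ψ j)))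
    (hψ : ∀ j, δ ≤ ∫ x, ψ j x * w x ∂μ)
    (hsign : ∀ α : Fin (4 * n) → ℝ, (∀ j, α j = 1 ∨ α j = -1) →
      (fun x => ∑ j, α j * ψ j x) ∈ F) :
    ∀ (ξ : Fin n → Ω) (φ : (Fin n → ℝ) → ℝ),
      ∃ f ∈ F, 2 * n * δ ≤ |(∫ x, f x * w x ∂μ) - φ (fun i => f (ξ i))| := by
  intro ξ φ
  classical
  rcases Nat.eq_zero_or_pos n with hn | hn
  · refine ⟨_, hsign (fun _ => 1) (fun _ => Or.inl rfl), ?_⟩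
    subst hn
    simpa using abs_nonneg _
  -- membership of the two key functions
  have hmemp : (fun x => ∑ j, ψ j x) ∈ F := by
    simpa using hsign (fun _ => 1) (fun _ => Or.inl rfl)
  -- integrability of each bump
  have hint : ∀ j, Integrable (fun x => ψ j x * w x) μ := by
    intro j
    have h1 := hFint _ (hsign (fun _ => 1) (fun _ => Or.inl rfl))
    have h2 := hFint _ (hsign (fun k => if k = j then -1 else 1)
      (by intro k; by_cases h : k = j <;> simp [h]))
    have h3 := (h1.sub h2).const_mul (2⁻¹ : ℝ)
    refine h3.congr ?_
    filter_upwards with x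
    simp only [Pi.sub_apply, one_mul]
    rw [← sub_mul, ← Finset.sum_sub_distrib]
    rw [Finset.sum_congr rfl (fun k _ => show ψ k x - (if k = j then -1 else 1) * ψ k x
      = if k = j then 2 * ψ k x else 0 from by by_cases h : k = j <;> simp [h] <;> ring)]
    rw [Finset.sum_ite_eq' Finset.univ j fun k => 2 * ψ k x]
    simp only [Finset.mem_univ, if_true]
    ring
  -- the set of seen indices
  set S : Finset (Fin (4 * n)) := Finset.univ.filter (fun j => ∃ i, ψ j (ξ i) ≠ 0) with hS
  have hcard : S.card ≤ n := by
    have := Finset.card_le_card_of_injOn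
      (f := fun j => if h : ∃ i, ψ j (ξ i) ≠ 0 then h.choose else ⟨0, hn⟩)
      (s := S) (t := (Finset.univ : Finset (Fin n)))
      (fun j _ => Finset.mem_univ _) ?_
    · simpa using this
    · intro j hj j' hj' hgej
      by_contra hne
      have hj1 : ∃ i, ψ j (ξ i) ≠ 0 := by simpa [hS] using hj
      have hj2 : ∃ i, ψ j' (ξ i) ≠ 0 := by simpa [hS] using hj'
      simp only [dif_pos hj1, dif_pos hj2] at hgej
      have m1 : ξ hj1.choose ∈ Function.support (ψ j) := hj1.choose_spec
      have m2 : ξ hj2.choose ∈ Function.support (ψ j') := hj2.choose_spec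
      rw [hgej] at m1
      exact Set.disjoint_left.mp (hdisj j j' hne) m1 m2
  -- signs
  set β : Fin (4 * n) → ℝ := fun j => if j ∈ S then 1 else -1 with hβ
  have hβsign : ∀ j, β j = 1 ∨ β j = -1 := by
    intro j; by_cases h : j ∈ S <;> simp [hβ, h]
  have hmemm : (fun x => ∑ j, β j * ψ j x) ∈ F := hsign β hβsign
  -- same data
  have hdata : (fun i => (∑ j, ψ j (ξ i))) = (fun i => ∑ j, β j * ψ j (ξ i)) := by
    funext i
    refine Finset.sum_congr rfl fun j _ => ?_
    by_cases h : j ∈ S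
    · simp [hβ, h]
    · have : ψ j (ξ i) = 0 := by
        by_contra h'
        exact h (by simp [hS]; exact ⟨i, h'⟩)
      simp [this]
  -- integral difference
  have hintsum1 : Integrable (fun x => ∑ j, ψ j x * w x) μ :=
    integrable_finset_sum _ fun j _ => hint j
  have hI1 : (∫ x, (∑ j, ψ j x) * w x ∂μ) = ∑ j, ∫ x, ψ j x * w x ∂μ := by
    rw [← integral_finset_sum _ fun j _ => hint j]
    congr 1; funext x; rw [Finset.sum_mul]
  have hI2 : (∫ x, (∑ j, β j * ψ j x) * w x ∂μ) = ∑ j, β j * ∫ x, ψ j x * w x ∂μ := by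
    rw [show (fun x => (∑ j, β j * ψ j x) * w x) = fun x => ∑ j, β j * (ψ j x * w x) from by
      funext x; rw [Finset.sum_mul]; exact Finset.sum_congr rfl fun j _ => by ring]
    rw [integral_finset_sum _ fun j _ => (hint j).const_mul (β j)]
    exact Finset.sum_congr rfl fun j _ => integral_const_mul _ _
  have hdiff : (6 : ℝ) * n * δ ≤
      (∫ x, (∑ j, ψ j x) * w x ∂μ) - (∫ x, (∑ j, β j * ψ j x) * w x ∂μ) := by
    rw [hI1, hI2, ← Finset.sum_sub_distrib]
    have : ∀ j, (∫ x, ψ j x * w x ∂μ) - β j * ∫ x, ψ j x * w x ∂μ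
        = (if j ∈ S then 0 else 2) * ∫ x, ψ j x * w x ∂μ := by
      intro j; by_cases h : j ∈ S <;> simp [hβ, h] <;> ring
    simp only [this, ite_mul, zero_mul]
    rw [Finset.sum_ite]
    simp only [zero_mul, Finset.sum_const_zero, zero_add]
    have h1 : ∀ j ∈ Finset.univ.filter (fun j => ¬ j ∈ S),
        (2 : ℝ) * δ ≤ 2 * ∫ x, ψ j x * w x ∂μ := fun j _ => by
      have := hψ j; linarith
    calc (6 : ℝ) * n * δ ≤ (Finset.univ.filter (fun j => ¬ j ∈ S)).card * (2 * δ) := by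
          have hc : 3 * n ≤ (Finset.univ.filter (fun j => ¬ j ∈ S)).card := by
            have := Finset.card_filter_add_card_filter_not
              (s := (Finset.univ : Finset (Fin (4*n)))) (p := fun j => j ∈ S)
            have hSc : (Finset.univ.filter (fun j => j ∈ S)).card = S.card := by
              congr 1; ext j; simp
            simp only [Finset.card_univ, Fintype.card_fin] at this
            omega
          have : (3 * n : ℝ) ≤ ((Finset.univ.filter (fun j => ¬ j ∈ S)).card : ℝ) := by
            exact_mod_cast hc
          nlinarith
      _ ≤ ∑ j ∈ Finset.univ.filter (fun j => ¬ j ∈ S), 2 * ∫ x, ψ j x * w x ∂μ := by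
          simpa using Finset.card_nsmul_le_sum _ _ _ h1
  -- conclude
  set D := φ (fun i => ∑ j, ψ j (ξ i)) with hD
  set I1 := ∫ x, (∑ j, ψ j x) * w x ∂μ
  set I2 := ∫ x, (∑ j, β j * ψ j x) * w x ∂μ
  by_cases hcase : 2 * n * δ ≤ |I1 - D|
  · exact ⟨_, hmemp, hcase⟩
  · refine ⟨_, hmemm, ?_⟩
    have hDeq : φ (fun i => ∑ j, β j * ψ j (ξ i)) = D := by rw [hD, hdata]
    rw [hDeq]
    push_neg at hcase
    have h1 : |I1 - D| < 2 * n * δ := hcase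
    have h2 : I1 - I2 ≥ 6 * n * δ := hdiff
    have key : I1 - I2 ≤ |I1 - D| + |I2 - D| := by
      calc I1 - I2 = (I1 - D) + -(I2 - D) := by ring
        _ ≤ |(I1 - D) + -(I2 - D)| := le_abs_self _
        _ ≤ |I1 - D| + |-(I2 - D)| := abs_add_le _ _
        _ = |I1 - D| + |I2 - D| := by rw [abs_neg]
    nlinarith [Nat.cast_nonneg (α := ℝ) n]
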